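/- With the labeling q_1,…,q_r, a_1,…,a_k of the arcs of the fixed proper circular arc representation of the minimum counterexample 𝒢: for every i with 2x ≤ i ≤ k − x, the arc a_i is not clockwise adjacent to the arc a_{i−2x+1}. -/

import Mathlib

open SimpleGraph
open scoped Classical

instance : Fact ((0:ℝ) < 1) := ⟨one_pos⟩

/-- An arc on the unit circle `AddCircle 1`, described by its left endpoint (the first
endpoint met anticlockwise from an interior point) and its (clockwise) length.
Since `0 < len < 1`, an arc is neither a single point nor the whole circle. -/
structure CArc where
  left : AddCircle (1:ℝ)
  len : ℝ
  len_pos : 0 < len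
  len_lt_one : len < 1

namespace CArc

/-- The set of points of the arc: going clockwise from the left endpoint for `len`. -/
def pts (a : CArc) : Set (AddCircle (1:ℝ)) :=
  {q | ∃ t : ℝ, 0 ≤ t ∧ t ≤ a.len ∧ q = a.left + (t : AddCircle (1:ℝ))}

/-- The right endpoint of an arc. -/
noncomputable def right (a : CArc) : AddCircle (1:ℝ) := a.left + ((a.len : ℝ) : AddCircle (1:ℝ))

end CArc

/-- A family of arcs on the circle: a finite set of arcs with all endpoints distinct. -/
structure ArcFamily where
  arcs : Finset CArc
  endpoints_distinct :
    ∀ a ∈ arcs, ∀ b ∈ arcs, a ≠ b →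
      a.left ≠ b.left ∧ a.left ≠ b.right ∧ a.right ≠ b.left ∧ a.right ≠ b.right

namespace ArcFamily

/-- A family of arcs is proper if no arc is properly contained in another. -/
def IsProper (F : ArcFamily) : Prop :=
  ∀ a ∈ F.arcs, ∀ b ∈ F.arcs, ¬ a.pts ⊂ b.pts

/-- The overlap set of a point `p`: all arcs of the family containing `p`. -/
noncomputable def overlap (F : ArcFamily) (p : AddCircle (1:ℝ)) : Finset CArc :=
  F.arcs.filter fun a => p ∈ a.pts

/-- `r_sup`: the maximum cardinality of an overlap set. -/
noncomputable def rsup (F : ArcFamily) : ℕ :=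
  sSup {n | ∃ p, (F.overlap p).card = n}

/-- `r_inf`: the minimum cardinality of an overlap set. -/
noncomputable def rinf (F : ArcFamily) : ℕ :=
  sInf {n | ∃ p, (F.overlap p).card = n}

/-- The circular arc graph of a family: vertices are the arcs, two distinct arcs are
adjacent iff they intersect. -/
def graph (F : ArcFamily) : SimpleGraph {a : CArc // a ∈ F.arcs} where
  Adj u v := u ≠ v ∧ (u.1.pts ∩ v.1.pts).Nonempty
  symm := ⟨by rintro u v ⟨h, q, h1, h2⟩; exact ⟨h.symm, q, h2, h1⟩⟩
  loopless := ⟨by rintro u ⟨h, -⟩; exact h rfl⟩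

/-- `F.CwAdj u v` : the arc `v` is clockwise adjacent to the arc `u`,
i.e. `v ≠ u` and `v ∈ O(r(u))`. -/
def CwAdj (F : ArcFamily) (u v : CArc) : Prop :=
  v ≠ u ∧ v ∈ F.overlap u.right

/-- `F.AcwAdj u v` : the arc `v` is anticlockwise adjacent to the arc `u`,
i.e. `v ≠ u` and `v ∈ O(l(u))`. -/
def AcwAdj (F : ArcFamily) (u v : CArc) : Prop :=
  v ≠ u ∧ v ∈ F.overlap u.left

end ArcFamily

/-- `G` has a complete minor on `m` vertices: there are `m` pairwise disjoint connected
branch sets with an edge of `G` between any two of them. -/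
def HasKMinor {V : Type*} (G : SimpleGraph V) (m : ℕ) : Prop :=
  ∃ B : Fin m → Set V,
    (∀ i, (G.induce (B i)).Connected) ∧
    (Pairwise fun i j => Disjoint (B i) (B j)) ∧
    (Pairwise fun i j => ∃ u ∈ B i, ∃ v ∈ B j, G.Adj u v)

/-- A graph is a proper circular arc graph if it is isomorphic to the circular arc graph
of some proper family of arcs. -/
def IsProperCircularArcGraph {V : Type*} (G : SimpleGraph V) : Prop :=
  ∃ F : ArcFamily, F.IsProper ∧ Nonempty (G ≃g F.graph)

/-- The clockwise angular distance from `p` to `q`: the unique `t ∈ [0,1)`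
with `q = p + t`.  Points are "encountered" in clockwise order of this quantity
when traversing clockwise from `p`. -/
noncomputable def angFrom (p q : AddCircle (1:ℝ)) : ℝ :=
  ((AddCircle.equivIco (1:ℝ) 0) (q - p) : ℝ)

/-- A minimum counterexample to Hadwiger's conjecture among proper circular arc graphs:
a proper family of arcs whose circular arc graph `𝒢` has no complete minor on `χ(𝒢)`
vertices, while every proper circular arc graph on fewer vertices than `𝒢` has a
complete minor on its own chromatic number of vertices. -/
structure MinCounterexample where
  F : ArcFamily
  proper : F.IsProper
  no_clique_minor : ∀ m : ℕ, F.graph.chromaticNumber = m → ¬ HasKMinor F.graph m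
  minimal : ∀ (V : Type) [inst : Fintype V] (G : SimpleGraph V),
    IsProperCircularArcGraph G → Fintype.card V < F.arcs.card →
    ∀ m : ℕ, G.chromaticNumber = m → HasKMinor G m

/-- A minimum counterexample `𝒢` to Hadwiger's conjecture among proper circular arc
graphs, together with a fixed maximum overlap set `O = O(p₀)` of cardinality `r`,
the quantities `x = χ(𝒢) − r` and `k = n − r`, and the labeling `q 1, …, q r`
(the arcs of `O`) and `a 1, …, a k` (the remaining arcs) of the arcs of the
representation in the clockwise order, starting from `p₀`, in which their right
endpoints are encountered. -/
structure LabeledMinCounterexample extends MinCounterexample where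
  p₀ : AddCircle (1:ℝ)
  r : ℕ
  x : ℕ
  k : ℕ
  q : ℕ → CArc
  a : ℕ → CArc
  hr : (F.overlap p₀).card = r
  hmax : r = F.rsup
  hx : F.graph.chromaticNumber = ((r + x : ℕ) : ℕ∞)
  hk : F.arcs.card = r + k
  q_mem : ∀ i, 1 ≤ i → i ≤ r → q i ∈ F.overlap p₀
  a_mem : ∀ j, 1 ≤ j → j ≤ k → a j ∈ F.arcs ∧ a j ∉ F.overlap p₀
  q_inj : ∀ i i', 1 ≤ i → i ≤ r → 1 ≤ i' → i' ≤ r → q i = q i' → i = i'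
  a_inj : ∀ j j', 1 ≤ j → j ≤ k → 1 ≤ j' → j' ≤ k → a j = a j' → j = j'
  q_order : ∀ i i', 1 ≤ i → i < i' → i' ≤ r →
    angFrom p₀ (q i).right < angFrom p₀ (q i').right
  a_order : ∀ j j', 1 ≤ j → j < j' → j' ≤ k →
    angFrom p₀ (a j).right < angFrom p₀ (a j').right
  qa_order : ∀ i j, 1 ≤ i → i ≤ r → 1 ≤ j → j ≤ k →
    angFrom p₀ (q i).right < angFrom p₀ (a j).right

/-! ### Auxiliary toolkit for the proof -/

section AngToolkit

open AddCircle

lemma angFrom_mem_Ico (p z : AddCircle (1:ℝ)) : angFrom p z ∈ Set.Ico (0:ℝ) 1 := by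
  have h := ((AddCircle.equivIco (1:ℝ) 0) (z - p)).2
  simpa [angFrom] using h

lemma angFrom_nonneg (p z : AddCircle (1:ℝ)) : 0 ≤ angFrom p z := (angFrom_mem_Ico p z).1

lemma angFrom_lt_one (p z : AddCircle (1:ℝ)) : angFrom p z < 1 := by
  have := (angFrom_mem_Ico p z).2; simpa using this

lemma coe_angFrom (p z : AddCircle (1:ℝ)) :
    ((angFrom p z : ℝ) : AddCircle (1:ℝ)) = z - p := by
  unfold angFrom
  have h := (AddCircle.equivIco (1:ℝ) 0).symm_apply_apply (z - p)
  calc ((((AddCircle.equivIco (1:ℝ) 0) (z - p) : Set.Ico (0:ℝ) (0+1)) : ℝ) : AddCircle (1:ℝ))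
      = (AddCircle.equivIco (1:ℝ) 0).symm ((AddCircle.equivIco (1:ℝ) 0) (z - p)) := rfl
    _ = z - p := h

lemma eq_add_angFrom (p z : AddCircle (1:ℝ)) : z = p + ((angFrom p z : ℝ) : AddCircle (1:ℝ)) := by
  rw [coe_angFrom]; abel

lemma angFrom_add_coe (p : AddCircle (1:ℝ)) (u : ℝ) :
    angFrom p (p + ((u : ℝ) : AddCircle (1:ℝ))) = Int.fract u := by
  unfold angFrom
  have h1 : (p + ((u : ℝ) : AddCircle (1:ℝ))) - p = ((u : ℝ) : AddCircle (1:ℝ)) := by abel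
  rw [h1]
  have := AddCircle.coe_equivIco_mk_apply (p := (1:ℝ)) u
  simpa using this

lemma angFrom_add_coe_of_mem (p : AddCircle (1:ℝ)) {u : ℝ} (hu : u ∈ Set.Ico (0:ℝ) 1) :
    angFrom p (p + ((u : ℝ) : AddCircle (1:ℝ))) = u := by
  rw [angFrom_add_coe, Int.fract_eq_self.2 ⟨hu.1, hu.2⟩]

lemma angFrom_inj {p z w : AddCircle (1:ℝ)} (h : angFrom p z = angFrom p w) : z = w := by
  rw [eq_add_angFrom p z, eq_add_angFrom p w, h]

end AngToolkit

section ArcCoords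

variable {p₀ : AddCircle (1:ℝ)}

lemma CArc.left_mem_pts (u : CArc) : u.left ∈ u.pts :=
  ⟨0, le_refl _, le_of_lt u.len_pos, by simp⟩

lemma CArc.right_mem_pts (u : CArc) : u.right ∈ u.pts :=
  ⟨u.len, le_of_lt u.len_pos, le_refl _, rfl⟩

lemma coe_real_add (s t : ℝ) :
    (((s + t : ℝ)) : AddCircle (1:ℝ)) = (s : AddCircle (1:ℝ)) + (t : AddCircle (1:ℝ)) := rfl

lemma coe_real_one_eq_zero : (((1:ℝ)) : AddCircle (1:ℝ)) = 0 := by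
  simpa using AddCircle.coe_period (p := (1:ℝ))

lemma coe_real_sub_one (s : ℝ) : (((s - 1 : ℝ)) : AddCircle (1:ℝ)) = ((s : ℝ) : AddCircle (1:ℝ)) := by
  have h : (s : ℝ) = (s - 1) + 1 := by ring
  nth_rewrite 2 [h]
  rw [coe_real_add, coe_real_one_eq_zero, add_zero]

/-- canonical representation of a point: `z = p₀ + c` with `c ∈ [0,1)`. -/
lemma exists_rep (z : AddCircle (1:ℝ)) :
    ∃ c : ℝ, 0 ≤ c ∧ c < 1 ∧ z = p₀ + ((c : ℝ) : AddCircle (1:ℝ)) ∧ angFrom p₀ z = c :=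
  ⟨angFrom p₀ z, angFrom_nonneg p₀ z, angFrom_lt_one p₀ z, eq_add_angFrom p₀ z, rfl⟩

lemma ang_shift {c : ℝ} (h0 : 0 ≤ c) (h1 : c < 1) :
    angFrom p₀ (p₀ + ((c : ℝ) : AddCircle (1:ℝ))) = c :=
  angFrom_add_coe_of_mem p₀ ⟨h0, h1⟩

lemma mem_pts_shift {u : CArc} {L : ℝ} (hl : u.left = p₀ + ((L : ℝ) : AddCircle (1:ℝ)))
    {t : ℝ} (h0 : 0 ≤ t) (hlen : t ≤ u.len) :
    p₀ + (((L + t : ℝ)) : AddCircle (1:ℝ)) ∈ u.pts :=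
  ⟨t, h0, hlen, by rw [hl, coe_real_add, add_assoc]⟩

lemma mem_pts_iff_shift {u : CArc} {L : ℝ} (hl : u.left = p₀ + ((L : ℝ) : AddCircle (1:ℝ)))
    (z : AddCircle (1:ℝ)) :
    z ∈ u.pts ↔ ∃ t : ℝ, 0 ≤ t ∧ t ≤ u.len ∧ z = p₀ + (((L + t : ℝ)) : AddCircle (1:ℝ)) := by
  constructor
  · rintro ⟨t, h0, hlen, rfl⟩
    exact ⟨t, h0, hlen, by rw [hl, coe_real_add, add_assoc]⟩
  · rintro ⟨t, h0, hlen, rfl⟩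
    exact mem_pts_shift hl h0 hlen

/-- For an arc not containing `p₀`: left coordinate is positive. -/
lemma aArc_L_pos {u : CArc} (hu : p₀ ∉ u.pts) : 0 < angFrom p₀ u.left := by
  obtain ⟨L, hL0, hL1, hl, hLa⟩ := exists_rep (p₀ := p₀) u.left
  rw [hLa]
  rcases lt_or_eq_of_le hL0 with h | h
  · exact h
  · exfalso
    apply hu
    rw [(mem_pts_iff_shift hl p₀)]
    exact ⟨0, le_refl _, le_of_lt u.len_pos, by rw [← h]; norm_num⟩

/-- For an arc not containing `p₀`: it does not wrap around. -/
lemma aArc_no_wrap {u : CArc} (hu : p₀ ∉ u.pts) : angFrom p₀ u.left + u.len < 1 := by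
  obtain ⟨L, hL0, hL1, hl, hLa⟩ := exists_rep (p₀ := p₀) u.left
  rw [hLa]
  by_contra hcon
  push_neg at hcon
  apply hu
  rw [(mem_pts_iff_shift hl p₀)]
  refine ⟨1 - L, by linarith, by linarith, ?_⟩
  have : (L + (1 - L) : ℝ) = 1 := by ring
  rw [this, coe_real_one_eq_zero, add_zero]

lemma aArc_R_eq {u : CArc} (hu : p₀ ∉ u.pts) :
    angFrom p₀ u.right = angFrom p₀ u.left + u.len := by
  obtain ⟨L, hL0, hL1, hl, hLa⟩ := exists_rep (p₀ := p₀) u.left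
  rw [hLa]
  have hnw : L + u.len < 1 := by
    have := aArc_no_wrap hu; rw [hLa] at this; exact this
  have h1 : u.right = p₀ + (((L + u.len : ℝ)) : AddCircle (1:ℝ)) := by
    rw [CArc.right, hl, coe_real_add, add_assoc]
  rw [h1, ang_shift (by linarith [u.len_pos]) hnw]

lemma aArc_mem_iff {u : CArc} (hu : p₀ ∉ u.pts) (z : AddCircle (1:ℝ)) :
    z ∈ u.pts ↔ angFrom p₀ u.left ≤ angFrom p₀ z ∧
      angFrom p₀ z ≤ angFrom p₀ u.left + u.len := by
  obtain ⟨L, hL0, hL1, hl, hLa⟩ := exists_rep (p₀ := p₀) u.left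
  obtain ⟨Z, hZ0, hZ1, hz, hZa⟩ := exists_rep (p₀ := p₀) z
  rw [hLa, hZa]
  have hnw : L + u.len < 1 := by
    have := aArc_no_wrap hu; rw [hLa] at this; exact this
  constructor
  · intro hmem
    rw [mem_pts_iff_shift hl] at hmem
    obtain ⟨t, h0, hlen, hzz⟩ := hmem
    have : Z = L + t := by
      rw [hz] at hzz
      have e1 := ang_shift (p₀ := p₀) hZ0 hZ1
      have e2 := ang_shift (p₀ := p₀) (c := L + t) (by linarith) (by linarith)
      rw [← hzz] at e2
      rw [e1] at e2
      exact e2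
    constructor <;> linarith
  · rintro ⟨h1, h2⟩
    rw [mem_pts_iff_shift hl]
    refine ⟨Z - L, by linarith, by linarith, ?_⟩
    have : (L + (Z - L) : ℝ) = Z := by ring
    rw [this, hz]

lemma qArc_R_eq {u : CArc} {t₀ : ℝ} (ht₀ : 0 ≤ t₀) (htl : t₀ ≤ u.len)
    (hp : p₀ = u.left + ((t₀ : ℝ) : AddCircle (1:ℝ))) :
    angFrom p₀ u.right = u.len - t₀ := by
  have h1 : u.right = p₀ + (((u.len - t₀ : ℝ)) : AddCircle (1:ℝ)) := by
    rw [CArc.right, hp, add_assoc, ← coe_real_add]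
    have : (t₀ + (u.len - t₀) : ℝ) = u.len := by ring
    rw [this]
  rw [h1, ang_shift (by linarith) (by linarith [u.len_lt_one])]

lemma qArc_left_rep {u : CArc} {t₀ : ℝ}
    (hp : p₀ = u.left + ((t₀ : ℝ) : AddCircle (1:ℝ))) :
    u.left = p₀ + (((-t₀ : ℝ)) : AddCircle (1:ℝ)) := by
  rw [hp, add_assoc, ← coe_real_add]
  have : (t₀ + (-t₀) : ℝ) = 0 := by ring
  rw [this]
  norm_num

lemma qArc_mem_right {u : CArc} {t₀ : ℝ} (ht₀ : 0 ≤ t₀) (htl : t₀ ≤ u.len)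
    (hp : p₀ = u.left + ((t₀ : ℝ) : AddCircle (1:ℝ)))
    {z : AddCircle (1:ℝ)} (hz : angFrom p₀ z ≤ u.len - t₀) : z ∈ u.pts := by
  obtain ⟨Z, hZ0, hZ1, hzr, hZa⟩ := exists_rep (p₀ := p₀) z
  rw [hZa] at hz
  rw [mem_pts_iff_shift (qArc_left_rep hp)]
  refine ⟨t₀ + Z, by linarith, by linarith, ?_⟩
  have : ((-t₀) + (t₀ + Z) : ℝ) = Z := by ring
  rw [this, hzr]

lemma qArc_mem_left {u : CArc} {t₀ : ℝ} (ht₀ : 0 < t₀) (htl : t₀ ≤ u.len)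
    (hp : p₀ = u.left + ((t₀ : ℝ) : AddCircle (1:ℝ)))
    {z : AddCircle (1:ℝ)} (hz : 1 - t₀ ≤ angFrom p₀ z) : z ∈ u.pts := by
  obtain ⟨Z, hZ0, hZ1, hzr, hZa⟩ := exists_rep (p₀ := p₀) z
  rw [hZa] at hz
  rw [mem_pts_iff_shift (qArc_left_rep hp)]
  refine ⟨t₀ + Z - 1, by linarith, by linarith, ?_⟩
  have : ((-t₀) + (t₀ + Z - 1) : ℝ) = Z - 1 := by ring
  rw [this, coe_real_sub_one, hzr]

lemma qArc_mem_necc {u : CArc} {t₀ : ℝ} (ht₀ : 0 ≤ t₀) (htl : t₀ ≤ u.len)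
    (hp : p₀ = u.left + ((t₀ : ℝ) : AddCircle (1:ℝ)))
    {z : AddCircle (1:ℝ)} (hz : z ∈ u.pts) :
    angFrom p₀ z ≤ u.len - t₀ ∨ (0 < t₀ ∧ 1 - t₀ ≤ angFrom p₀ z) := by
  rw [mem_pts_iff_shift (qArc_left_rep hp)] at hz
  obtain ⟨t, h0, hlen, hzz⟩ := hz
  rcases le_or_gt t₀ t with hc | hc
  · left
    have : ((-t₀) + t : ℝ) = t - t₀ := by ring
    rw [this] at hzz
    have := ang_shift (p₀ := p₀) (c := t - t₀) (by linarith) (by linarith [u.len_lt_one])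
    rw [← hzz] at this
    rw [this]
    linarith
  · right
    have ht₀pos : 0 < t₀ := lt_of_le_of_lt h0 hc
    have hlt1 : t₀ < 1 := lt_of_le_of_lt htl u.len_lt_one
    refine ⟨ht₀pos, ?_⟩
    have heq : ((-t₀) + t : ℝ) = (t - t₀ + 1) - 1 := by ring
    rw [heq, coe_real_sub_one] at hzz
    have := ang_shift (p₀ := p₀) (c := t - t₀ + 1) (by linarith) (by linarith)
    rw [← hzz] at this
    rw [this]
    linarith

lemma qArc_L_eq_zero {u : CArc} (hp : p₀ = u.left) : angFrom p₀ u.left = 0 := by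
  rw [← hp]
  have h := ang_shift (p₀ := p₀) (c := (0:ℝ)) le_rfl one_pos
  have h2 : p₀ + (((0:ℝ)) : AddCircle (1:ℝ)) = p₀ := by norm_num
  rw [h2] at h
  exact h

lemma qArc_L_eq {u : CArc} {t₀ : ℝ} (ht₀ : 0 < t₀) (ht1 : t₀ < 1)
    (hp : p₀ = u.left + ((t₀ : ℝ) : AddCircle (1:ℝ))) :
    angFrom p₀ u.left = 1 - t₀ := by
  have h1 : u.left = p₀ + (((1 - t₀ : ℝ)) : AddCircle (1:ℝ)) := by
    rw [qArc_left_rep hp]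
    have : (1 - t₀ : ℝ) = (-t₀) + 1 := by ring
    rw [this, coe_real_add, coe_real_one_eq_zero, add_zero]
  rw [h1, ang_shift (by linarith) (by linarith)]

end ArcCoords

namespace LabeledMinCounterexample

variable (C : LabeledMinCounterexample)

lemma mem_overlap_iff {u : CArc} {p : AddCircle (1:ℝ)} :
    u ∈ C.F.overlap p ↔ u ∈ C.F.arcs ∧ p ∈ u.pts := Finset.mem_filter

lemma overlap_card_le (p : AddCircle (1:ℝ)) : (C.F.overlap p).card ≤ C.r := by
  rw [C.hmax]
  apply le_csSup
  · refine ⟨C.F.arcs.card, ?_⟩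
    rintro n ⟨p', rfl⟩
    exact Finset.card_le_card (Finset.filter_subset _ _)
  · exact ⟨p, rfl⟩

lemma a_arcs {j : ℕ} (h1 : 1 ≤ j) (h2 : j ≤ C.k) : C.a j ∈ C.F.arcs := (C.a_mem j h1 h2).1

lemma a_not_p₀ {j : ℕ} (h1 : 1 ≤ j) (h2 : j ≤ C.k) : C.p₀ ∉ (C.a j).pts := by
  intro hmem
  exact (C.a_mem j h1 h2).2 ((C.mem_overlap_iff).2 ⟨(C.a_mem j h1 h2).1, hmem⟩)

lemma q_arcs {t : ℕ} (h1 : 1 ≤ t) (h2 : t ≤ C.r) : C.q t ∈ C.F.arcs :=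
  Finset.filter_subset _ _ (C.q_mem t h1 h2)

lemma q_p₀ {t : ℕ} (h1 : 1 ≤ t) (h2 : t ≤ C.r) : C.p₀ ∈ (C.q t).pts :=
  ((C.mem_overlap_iff).1 (C.q_mem t h1 h2)).2

lemma a_ne_q {j t : ℕ} (hj1 : 1 ≤ j) (hj2 : j ≤ C.k) (ht1 : 1 ≤ t) (ht2 : t ≤ C.r) :
    C.a j ≠ C.q t := by
  intro h
  exact (C.a_mem j hj1 hj2).2 (h ▸ C.q_mem t ht1 ht2)

/-- coordinates -/
noncomputable def L (j : ℕ) : ℝ := angFrom C.p₀ (C.a j).left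
noncomputable def R (j : ℕ) : ℝ := angFrom C.p₀ (C.a j).right
noncomputable def lam (t : ℕ) : ℝ := angFrom C.p₀ (C.q t).left
noncomputable def rho (t : ℕ) : ℝ := angFrom C.p₀ (C.q t).right

lemma R_eq {j : ℕ} (h1 : 1 ≤ j) (h2 : j ≤ C.k) : C.R j = C.L j + (C.a j).len :=
  aArc_R_eq (C.a_not_p₀ h1 h2)

lemma L_lt_R {j : ℕ} (h1 : 1 ≤ j) (h2 : j ≤ C.k) : C.L j < C.R j := by
  rw [C.R_eq h1 h2]; linarith [(C.a j).len_pos]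

lemma mem_a_iff {j : ℕ} (h1 : 1 ≤ j) (h2 : j ≤ C.k) (z : AddCircle (1:ℝ)) :
    z ∈ (C.a j).pts ↔ C.L j ≤ angFrom C.p₀ z ∧ angFrom C.p₀ z ≤ C.R j := by
  rw [C.R_eq h1 h2]
  exact aArc_mem_iff (C.a_not_p₀ h1 h2) z

lemma R_strict_mono {j j' : ℕ} (h1 : 1 ≤ j) (h : j < j') (h2 : j' ≤ C.k) : C.R j < C.R j' :=
  C.a_order j j' h1 h h2

lemma R_mono {j j' : ℕ} (h1 : 1 ≤ j) (h : j ≤ j') (h2 : j' ≤ C.k) : C.R j ≤ C.R j' := by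
  rcases eq_or_lt_of_le h with rfl | h'
  · exact le_refl _
  · exact le_of_lt (C.R_strict_mono h1 h' h2)

lemma rho_lt_R {t j : ℕ} (ht1 : 1 ≤ t) (ht2 : t ≤ C.r) (hj1 : 1 ≤ j) (hj2 : j ≤ C.k) :
    C.rho t < C.R j := C.qa_order t j ht1 ht2 hj1 hj2

lemma a_pts_ne {j j' : ℕ} (hj1 : 1 ≤ j) (hj2 : j ≤ C.k) (hj1' : 1 ≤ j') (hj2' : j' ≤ C.k)
    (hne : j ≠ j') : (C.a j).left ≠ (C.a j').left := by
  have hane : C.a j ≠ C.a j' := fun h => hne (C.a_inj j j' hj1 hj2 hj1' hj2' h)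
  exact (C.F.endpoints_distinct _ (C.a_arcs hj1 hj2) _ (C.a_arcs hj1' hj2') hane).1

lemma L_strict_mono {j j' : ℕ} (h1 : 1 ≤ j) (h : j < j') (h2 : j' ≤ C.k) : C.L j < C.L j' := by
  by_contra hcon
  push_neg at hcon
  rcases eq_or_lt_of_le hcon with heq | hlt
  · have heq' : angFrom C.p₀ (C.a j').left = angFrom C.p₀ (C.a j).left := heq
    have hll : (C.a j').left = (C.a j).left := angFrom_inj heq'
    exact C.a_pts_ne h1 (le_trans (le_of_lt h) h2) (by omega) h2 (by omega) hll.symm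
  ·
    have hRR : C.R j < C.R j' := C.R_strict_mono h1 h h2
    have hsub : (C.a j).pts ⊂ (C.a j').pts := by
      constructor
      · intro z hz
        rw [C.mem_a_iff h1 (by omega)] at hz
        rw [C.mem_a_iff (by omega) h2]
        exact ⟨by linarith [hz.1], by linarith [hz.2]⟩
      · intro hsup
        have := hsup (C.a j').right_mem_pts
        rw [C.mem_a_iff h1 (by omega)] at this
        have : C.R j' ≤ C.R j := this.2
        linarith
    exact C.proper _ (C.a_arcs h1 (by omega)) _ (C.a_arcs (by omega) h2) hsub

lemma L_mono {j j' : ℕ} (h1 : 1 ≤ j) (h : j ≤ j') (h2 : j' ≤ C.k) : C.L j ≤ C.L j' := by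
  rcases eq_or_lt_of_le h with rfl | h'
  · exact le_refl _
  · exact le_of_lt (C.L_strict_mono h1 h' h2)

/-- the left coordinate of every `a`-arc is less than the left coordinate of any `q`-arc,
provided the latter is positive. -/
lemma L_lt_lam {t j : ℕ} (ht1 : 1 ≤ t) (ht2 : t ≤ C.r) (hj1 : 1 ≤ j) (hj2 : j ≤ C.k)
    (hlam : 0 < C.lam t) : C.L j < C.lam t := by
  obtain ⟨t₀, ht₀0, ht₀l, hp⟩ := C.q_p₀ ht1 ht2
  have ht₀1 : t₀ < 1 := lt_of_le_of_lt ht₀l (C.q t).len_lt_one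
  have ht₀pos : 0 < t₀ := by
    rcases eq_or_lt_of_le ht₀0 with rfl | h
    · exfalso
      have : C.p₀ = (C.q t).left := by
        rw [hp]; norm_num
      have := qArc_L_eq_zero this
      rw [lam] at hlam
      rw [this] at hlam
      exact lt_irrefl _ hlam
    · exact h
  have hlamEq : C.lam t = 1 - t₀ := qArc_L_eq ht₀pos ht₀1 hp
  by_contra hcon
  push_neg at hcon
  rcases eq_or_lt_of_le hcon with heq | hlt
  · -- equal left endpoints
    have : (C.q t).left = (C.a j).left := angFrom_inj heq
    have hane : C.a j ≠ C.q t := C.a_ne_q hj1 hj2 ht1 ht2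
    exact (C.F.endpoints_distinct _ (C.a_arcs hj1 hj2) _ (C.q_arcs ht1 ht2) hane).1 this.symm
  · -- lam t < L j : a j ⊂ q t
    have hsub : (C.a j).pts ⊂ (C.q t).pts := by
      constructor
      · intro z hz
        rw [C.mem_a_iff hj1 hj2] at hz
        apply qArc_mem_left ht₀pos ht₀l hp
        rw [← hlamEq]
        linarith [hz.1]
      · intro hsup
        exact C.a_not_p₀ hj1 hj2 (hsup (C.q_p₀ ht1 ht2))
    exact C.proper _ (C.a_arcs hj1 hj2) _ (C.q_arcs ht1 ht2) hsub

lemma q_mem_cases {t : ℕ} (ht1 : 1 ≤ t) (ht2 : t ≤ C.r) {z : AddCircle (1:ℝ)}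
    (hz : z ∈ (C.q t).pts) :
    angFrom C.p₀ z ≤ C.rho t ∨ (0 < C.lam t ∧ C.lam t ≤ angFrom C.p₀ z) := by
  obtain ⟨t₀, ht₀0, ht₀l, hp⟩ := C.q_p₀ ht1 ht2
  have ht₀1 : t₀ < 1 := lt_of_le_of_lt ht₀l (C.q t).len_lt_one
  have hrhoEq : C.rho t = (C.q t).len - t₀ := qArc_R_eq ht₀0 ht₀l hp
  rcases qArc_mem_necc ht₀0 ht₀l hp hz with h | ⟨ht₀pos, h⟩
  · left; rw [hrhoEq]; exact h
  · right
    have hlamEq : C.lam t = 1 - t₀ := qArc_L_eq ht₀pos ht₀1 hp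
    rw [hlamEq]
    exact ⟨by linarith, h⟩

lemma q_mem_of_le_rho {t : ℕ} (ht1 : 1 ≤ t) (ht2 : t ≤ C.r) {z : AddCircle (1:ℝ)}
    (hz : angFrom C.p₀ z ≤ C.rho t) : z ∈ (C.q t).pts := by
  obtain ⟨t₀, ht₀0, ht₀l, hp⟩ := C.q_p₀ ht1 ht2
  have hrhoEq : C.rho t = (C.q t).len - t₀ := qArc_R_eq ht₀0 ht₀l hp
  exact qArc_mem_right ht₀0 ht₀l hp (by rw [← hrhoEq]; exact hz)

lemma q_mem_of_lam_le {t : ℕ} (ht1 : 1 ≤ t) (ht2 : t ≤ C.r) {z : AddCircle (1:ℝ)}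
    (hlam : 0 < C.lam t) (hz : C.lam t ≤ angFrom C.p₀ z) : z ∈ (C.q t).pts := by
  obtain ⟨t₀, ht₀0, ht₀l, hp⟩ := C.q_p₀ ht1 ht2
  have ht₀1 : t₀ < 1 := lt_of_le_of_lt ht₀l (C.q t).len_lt_one
  have ht₀pos : 0 < t₀ := by
    rcases eq_or_lt_of_le ht₀0 with rfl | h
    · exfalso
      have hpp : C.p₀ = (C.q t).left := by rw [hp]; norm_num
      have := qArc_L_eq_zero hpp
      rw [lam, this] at hlam
      exact lt_irrefl _ hlam
    · exact h
  have hlamEq : C.lam t = 1 - t₀ := qArc_L_eq ht₀pos ht₀1 hp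
  exact qArc_mem_left ht₀pos ht₀l hp (by rw [← hlamEq]; exact hz)

end LabeledMinCounterexample

section GraphMachinery

lemma hasKMinor_mono {V : Type*} {G : SimpleGraph V} {m m' : ℕ} (h : m' ≤ m)
    (hm : HasKMinor G m) : HasKMinor G m' := by
  obtain ⟨B, hconn, hdisj, hadj⟩ := hm
  refine ⟨B ∘ Fin.castLE h, fun i => hconn _, ?_, ?_⟩
  · intro i j hij
    exact hdisj ((Fin.strictMono_castLE h).injective.ne hij)
  · intro i j hij
    exact hadj ((Fin.strictMono_castLE h).injective.ne hij)

namespace LabeledMinCounterexample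

variable (C : LabeledMinCounterexample)

/-- The family obtained by deleting one arc. -/
noncomputable def delFam (v : CArc) : ArcFamily where
  arcs := C.F.arcs.erase v
  endpoints_distinct := fun a ha b hb hab =>
    C.F.endpoints_distinct a (Finset.erase_subset _ _ ha) b (Finset.erase_subset _ _ hb) hab

lemma delFam_proper (v : CArc) : (C.delFam v).IsProper := fun a ha b hb =>
  C.proper a (Finset.erase_subset _ _ ha) b (Finset.erase_subset _ _ hb)

lemma hasKMinor_lift (v : CArc) {m : ℕ} (hm : HasKMinor (C.delFam v).graph m) :
    HasKMinor C.F.graph m := by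
  obtain ⟨B, hconn, hdisj, hadj⟩ := hm
  set ι : {a : CArc // a ∈ (C.delFam v).arcs} → {a : CArc // a ∈ C.F.arcs} :=
    fun u => ⟨u.1, Finset.erase_subset _ _ u.2⟩ with hι
  have hιinj : Function.Injective ι := by
    intro u w huw
    have h := congrArg Subtype.val huw
    exact Subtype.ext h
  refine ⟨fun i => ι '' (B i), ?_, ?_, ?_⟩
  · intro i
    have hc := hconn i
    -- build a surjective graph hom from the induced graph on `B i` to the induced graph
    -- on `ι '' B i`.
    let f : (B i) → (ι '' (B i)) := fun u => ⟨ι u.1, ⟨u.1, u.2, rfl⟩⟩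
    have hf : Function.Surjective f := by
      rintro ⟨w, ⟨u, hu, rfl⟩⟩
      exact ⟨⟨u, hu⟩, rfl⟩
    have hhom : ∀ {u w : (B i)}, ((C.delFam v).graph.induce (B i)).Adj u w →
        (C.F.graph.induce (ι '' (B i))).Adj (f u) (f w) := by
      intro u w huw
      have h1 : (C.delFam v).graph.Adj u.1 w.1 := huw
      obtain ⟨hne, hint⟩ := h1
      refine ⟨?_, hint⟩
      intro hh
      exact hne (hιinj (Subtype.ext (congrArg Subtype.val hh)))
    exact SimpleGraph.Connected.map ⟨f, hhom⟩ hf hc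
  · intro i j hij
    have hd := Set.disjoint_left.1 (hdisj hij)
    apply Set.disjoint_left.2
    rintro w ⟨u, hu, rfl⟩ ⟨u', hu', hval⟩
    have : u' = u := hιinj hval
    exact hd hu (this ▸ hu')
  · intro i j hij
    obtain ⟨u, hu, w, hw, hadj'⟩ := hadj hij
    refine ⟨ι u, ⟨u, hu, rfl⟩, ι w, ⟨w, hw, rfl⟩, ?_⟩
    obtain ⟨hne, hint⟩ := hadj'
    exact ⟨fun hh => hne (hιinj hh), hint⟩

/-- In the minimum counterexample, every vertex-deleted subgraph is
`(r+x-1)`-colorable. -/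
lemma delFam_colorable (v : CArc) (hv : v ∈ C.F.arcs) {β : ℕ} (hβ : β + 1 = C.r + C.x) :
    (C.delFam v).graph.Colorable β := by
  classical
  set Gv := (C.delFam v).graph with hGv
  have hfin : Fintype {a : CArc // a ∈ (C.delFam v).arcs} := by infer_instance
  obtain ⟨m, hm⟩ : ∃ m : ℕ, Gv.chromaticNumber = (m : ℕ∞) := by
    have h1 : Gv.chromaticNumber ≠ ⊤ := by
      have h2 := (Gv.colorable_of_fintype).chromaticNumber_le
      intro hcon
      rw [hcon] at h2
      simp at h2
    obtain ⟨m, hm⟩ := WithTop.ne_top_iff_exists.1 h1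
    exact ⟨m, hm.symm⟩
  have hcard : Fintype.card {a : CArc // a ∈ (C.delFam v).arcs} < C.F.arcs.card := by
    have h1 : ((C.delFam v).arcs).card = C.F.arcs.card - 1 := by
      simpa [delFam] using Finset.card_erase_of_mem hv
    have h2 : 0 < C.F.arcs.card := Finset.card_pos.2 ⟨v, hv⟩
    have := Fintype.card_coe ((C.delFam v).arcs)
    omega
  have hpca : IsProperCircularArcGraph Gv := ⟨C.delFam v, C.delFam_proper v, ⟨SimpleGraph.Iso.refl⟩⟩
  have hminor : HasKMinor Gv m := C.minimal _ Gv hpca hcard m hm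
  by_contra hcon
  have hmβ : β < m := by
    by_contra hmle
    push_neg at hmle
    apply hcon
    rw [← SimpleGraph.chromaticNumber_le_iff_colorable, hm]
    exact_mod_cast (Nat.cast_le (α := ℕ∞)).2 hmle
  have : HasKMinor Gv (C.r + C.x) := hasKMinor_mono (by omega) hminor
  exact C.no_clique_minor (C.r + C.x) C.hx (C.hasKMinor_lift v this)

/-- Rainbow-neighborhood lemma: in the minimum counterexample every vertex has at least
`r + x - 1` neighbours, realized as an explicit finset of intersecting arcs. -/
lemma rainbow (v : CArc) (hv : v ∈ C.F.arcs) (hx1 : 1 ≤ C.x) :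
    ∃ N : Finset CArc, (∀ u ∈ N, u ∈ C.F.arcs ∧ u ≠ v ∧ (u.pts ∩ v.pts).Nonempty) ∧
      C.r + C.x ≤ N.card + 1 := by
  classical
  set β : ℕ := C.r + C.x - 1 with hβdef
  have hβ : β + 1 = C.r + C.x := by omega
  obtain ⟨c⟩ := C.delFam_colorable v hv hβ
  -- every color appears on a neighbour of v
  have hall : ∀ i : Fin β, ∃ u : {a : CArc // a ∈ (C.delFam v).arcs},
      u.1 ≠ v ∧ (u.1.pts ∩ v.pts).Nonempty ∧ c u = i := by
    by_contra hcon
    push_neg at hcon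
    obtain ⟨i₀, hi₀⟩ := hcon
    -- extend the coloring to v, contradiction with χ = r + x
    have hvmem : ∀ w : {a : CArc // a ∈ C.F.arcs}, w.1 ≠ v → w.1 ∈ (C.delFam v).arcs :=
      fun w hw => Finset.mem_erase.2 ⟨hw, w.2⟩
    let c' : {a : CArc // a ∈ C.F.arcs} → Fin β := fun w =>
      if h : w.1 = v then i₀ else c ⟨w.1, hvmem w h⟩
    have hvalid : ∀ {u w : {a : CArc // a ∈ C.F.arcs}}, C.F.graph.Adj u w → c' u ≠ c' w := by
      intro u w huw
      obtain ⟨hne, hint⟩ := huw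
      by_cases hu : u.1 = v <;> by_cases hw : w.1 = v
      · exact absurd (Subtype.ext (hu.trans hw.symm)) hne
      · simp only [c', dif_pos hu, dif_neg hw]
        intro hh
        refine hi₀ ⟨w.1, hvmem w hw⟩ hw ?_ hh.symm
        obtain ⟨z, hz1, hz2⟩ := hint
        exact ⟨z, hz2, hu ▸ hz1⟩
      · simp only [c', dif_neg hu, dif_pos hw]
        intro hh
        refine hi₀ ⟨u.1, hvmem u hu⟩ hu ?_ hh
        obtain ⟨z, hz1, hz2⟩ := hint
        exact ⟨z, hz1, hw ▸ hz2⟩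
      · simp only [c', dif_neg hu, dif_neg hw]
        have hadj : (C.delFam v).graph.Adj ⟨u.1, hvmem u hu⟩ ⟨w.1, hvmem w hw⟩ := by
          refine ⟨?_, hint⟩
          intro hh
          have h2 := congrArg Subtype.val hh
          exact hne (Subtype.ext h2)
        exact c.valid hadj
    have hcolor : C.F.graph.Colorable β := ⟨SimpleGraph.Coloring.mk c' hvalid⟩
    have hle := hcolor.chromaticNumber_le
    rw [C.hx] at hle
    have : C.r + C.x ≤ β := by exact_mod_cast hle
    omega
  choose f hf1 hf2 hf3 using hall
  have hfinj : Function.Injective (fun i => (f i).1) := by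
    intro i j hij
    have h1 : c (f i) = i := hf3 i
    have h2 : c (f j) = j := hf3 j
    have : f i = f j := Subtype.ext hij
    rw [this] at h1
    rw [h2] at h1
    exact h1.symm
  refine ⟨Finset.image (fun i => (f i).1) Finset.univ, ?_, ?_⟩
  · intro u hu
    obtain ⟨i, _, rfl⟩ := Finset.mem_image.1 hu
    exact ⟨Finset.erase_subset _ _ (f i).2, hf1 i, hf2 i⟩
  · rw [Finset.card_image_of_injective _ hfinj, Finset.card_univ, Fintype.card_fin]
    omega

end LabeledMinCounterexample

end GraphMachinery

namespace LabeledMinCounterexample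

variable (C : LabeledMinCounterexample)

lemma Qimg_eq : (Finset.Icc 1 C.r).image C.q = C.F.overlap C.p₀ := by
  classical
  apply Finset.eq_of_subset_of_card_le
  · intro u hu
    obtain ⟨t, ht, rfl⟩ := Finset.mem_image.1 hu
    rw [Finset.mem_Icc] at ht
    exact C.q_mem t ht.1 ht.2
  · rw [C.hr]
    have hinj : Set.InjOn C.q (Finset.Icc 1 C.r) := by
      intro t ht t' ht' h
      rw [Finset.coe_Icc, Set.mem_Icc] at ht ht'
      exact C.q_inj t t' ht.1 ht.2 ht'.1 ht'.2 h
    rw [Finset.card_image_of_injOn hinj, Nat.card_Icc]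
    omega

lemma Aimg_eq : (Finset.Icc 1 C.k).image C.a = C.F.arcs \ C.F.overlap C.p₀ := by
  classical
  apply Finset.eq_of_subset_of_card_le
  · intro u hu
    obtain ⟨j, hj, rfl⟩ := Finset.mem_image.1 hu
    rw [Finset.mem_Icc] at hj
    exact Finset.mem_sdiff.2 ⟨(C.a_mem j hj.1 hj.2).1, (C.a_mem j hj.1 hj.2).2⟩
  · have hcard : (C.F.arcs \ C.F.overlap C.p₀).card = C.k := by
      have hss : C.F.overlap C.p₀ ⊆ C.F.arcs := fun u hu => ((C.mem_overlap_iff).1 hu).1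
      rw [Finset.card_sdiff_of_subset hss, C.hr, C.hk]
      omega
    have hinj : Set.InjOn C.a (Finset.Icc 1 C.k) := by
      intro j hj j' hj' h
      rw [Finset.coe_Icc, Set.mem_Icc] at hj hj'
      exact C.a_inj j j' hj.1 hj.2 hj'.1 hj'.2 h
    rw [hcard, Finset.card_image_of_injOn hinj, Nat.card_Icc]
    omega

lemma classify {u : CArc} (hu : u ∈ C.F.arcs) :
    (∃ t, 1 ≤ t ∧ t ≤ C.r ∧ u = C.q t) ∨ (∃ j, 1 ≤ j ∧ j ≤ C.k ∧ u = C.a j) := by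
  classical
  by_cases hov : u ∈ C.F.overlap C.p₀
  · left
    rw [← C.Qimg_eq] at hov
    obtain ⟨t, ht, rfl⟩ := Finset.mem_image.1 hov
    rw [Finset.mem_Icc] at ht
    exact ⟨t, ht.1, ht.2, rfl⟩
  · right
    have : u ∈ C.F.arcs \ C.F.overlap C.p₀ := Finset.mem_sdiff.2 ⟨hu, hov⟩
    rw [← C.Aimg_eq] at this
    obtain ⟨j, hj, rfl⟩ := Finset.mem_image.1 this
    rw [Finset.mem_Icc] at hj
    exact ⟨j, hj.1, hj.2, rfl⟩

/-- Any arc intersecting `a j` contains one of its endpoints. -/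
lemma nbr_endpoint {j : ℕ} (hj1 : 1 ≤ j) (hj2 : j ≤ C.k) {u : CArc} (hu : u ∈ C.F.arcs)
    (hne : u ≠ C.a j) (hint : (u.pts ∩ (C.a j).pts).Nonempty) :
    (C.a j).left ∈ u.pts ∨ (C.a j).right ∈ u.pts := by
  obtain ⟨z, hzu, hza⟩ := hint
  rw [C.mem_a_iff hj1 hj2] at hza
  rcases C.classify hu with ⟨t, ht1, ht2, rfl⟩ | ⟨m, hm1, hm2, rfl⟩
  · rcases C.q_mem_cases ht1 ht2 hzu with h | ⟨hlam, h⟩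
    · left
      exact C.q_mem_of_le_rho ht1 ht2 (le_trans hza.1 h)
    · right
      exact C.q_mem_of_lam_le ht1 ht2 hlam (le_trans h hza.2)
  · have hmj : m ≠ j := fun h => hne (by rw [h])
    rw [C.mem_a_iff hm1 hm2] at hzu
    rcases lt_or_gt_of_ne hmj with hlt | hgt
    · left
      rw [C.mem_a_iff hm1 hm2]
      exact ⟨le_of_lt (C.L_strict_mono hm1 hlt hj2),
        le_trans hza.1 hzu.2⟩
    · right
      rw [C.mem_a_iff hm1 hm2]
      exact ⟨le_trans hzu.1 hza.2, C.R_mono hj1 (le_of_lt hgt) hm2⟩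

/-- counting bound: the overlap at the right endpoint of `a j` has more than `x` arcs. -/
lemma overlap_right_large (hx1 : 1 ≤ C.x) {j : ℕ} (hj1 : 1 ≤ j) (hj2 : j ≤ C.k) :
    C.x + 1 ≤ (C.F.overlap (C.a j).right).card := by
  classical
  obtain ⟨N, hN, hNcard⟩ := C.rainbow (C.a j) (C.a_arcs hj1 hj2) hx1
  set Ol := C.F.overlap (C.a j).left with hOl
  set Or := C.F.overlap (C.a j).right with hOr
  have hsub : insert (C.a j) N ⊆ Ol ∪ Or := by
    intro u hu
    rcases Finset.mem_insert.1 hu with rfl | hu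
    · exact Finset.mem_union_left _ ((C.mem_overlap_iff).2 ⟨C.a_arcs hj1 hj2, (C.a j).left_mem_pts⟩)
    · obtain ⟨huarc, hune, huint⟩ := hN u hu
      rcases C.nbr_endpoint hj1 hj2 huarc hune huint with h | h
      · exact Finset.mem_union_left _ ((C.mem_overlap_iff).2 ⟨huarc, h⟩)
      · exact Finset.mem_union_right _ ((C.mem_overlap_iff).2 ⟨huarc, h⟩)
  have hnotin : C.a j ∉ N := fun h => (hN _ h).2.1 rfl
  have h1 : C.r + C.x ≤ (Ol ∪ Or).card := by
    calc C.r + C.x ≤ N.card + 1 := hNcard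
    _ = (insert (C.a j) N).card := (Finset.card_insert_of_notMem hnotin).symm
    _ ≤ (Ol ∪ Or).card := Finset.card_le_card hsub
  have h2 : (Ol ∪ Or).card + (Ol ∩ Or).card = Ol.card + Or.card :=
    Finset.card_union_add_card_inter _ _
  have h3 : 1 ≤ (Ol ∩ Or).card := by
    refine Finset.card_pos.2 ⟨C.a j, Finset.mem_inter.2 ⟨?_, ?_⟩⟩
    · exact (C.mem_overlap_iff).2 ⟨C.a_arcs hj1 hj2, (C.a j).left_mem_pts⟩
    · exact (C.mem_overlap_iff).2 ⟨C.a_arcs hj1 hj2, (C.a j).right_mem_pts⟩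
  have h4 : Ol.card ≤ C.r := C.overlap_card_le _
  omega

/-- If some `q`-arc contains the right endpoint of `a j`, then every later `a`-arc does. -/
lemma q_right_all_above {j t : ℕ} (hj1 : 1 ≤ j) (hj2 : j ≤ C.k) (ht1 : 1 ≤ t) (ht2 : t ≤ C.r)
    (h : (C.a j).right ∈ (C.q t).pts) :
    ∀ m, j ≤ m → m ≤ C.k → (C.a j).right ∈ (C.a m).pts := by
  intro m hm1 hm2
  have hRj : C.R j = angFrom C.p₀ (C.a j).right := rfl
  rcases C.q_mem_cases ht1 ht2 h with hcase | ⟨hlam, hcase⟩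
  · exfalso
    have h2 := C.rho_lt_R ht1 ht2 hj1 hj2
    rw [hRj] at h2
    linarith
  · rw [C.mem_a_iff (le_trans hj1 hm1) hm2]
    constructor
    · have hL := C.L_lt_lam ht1 ht2 (le_trans hj1 hm1) hm2 hlam
      linarith
    · have hRm := C.R_mono hj1 hm1 hm2
      rw [hRj] at hRm
      exact hRm

/-- The step lemma: `a m` contains the right endpoint of `a j` whenever `j ≤ m ≤ j + x`. -/
lemma step_lemma (hx1 : 1 ≤ C.x) {j m : ℕ} (hj1 : 1 ≤ j) (hj2 : j ≤ C.k)
    (hjm : j ≤ m) (hmx : m ≤ j + C.x) (hmk : m ≤ C.k) :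
    (C.a j).right ∈ (C.a m).pts := by
  classical
  by_cases hq : ∃ t, 1 ≤ t ∧ t ≤ C.r ∧ (C.a j).right ∈ (C.q t).pts
  · obtain ⟨t, ht1, ht2, hqt⟩ := hq
    exact C.q_right_all_above hj1 hj2 ht1 ht2 hqt m hjm hmk
  · -- all arcs in the overlap at `r (a j)` are `a`-arcs with index in `[j, k]`
    set S := (Finset.Icc j C.k).filter (fun m' => (C.a j).right ∈ (C.a m').pts) with hS
    have hOsub : C.F.overlap (C.a j).right ⊆ S.image C.a := by
      intro u hu
      obtain ⟨huarc, humem⟩ := (C.mem_overlap_iff).1 hu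
      rcases C.classify huarc with ⟨t, ht1, ht2, rfl⟩ | ⟨m', hm1', hm2', rfl⟩
      · exact absurd ⟨t, ht1, ht2, humem⟩ hq
      · have hm'j : j ≤ m' := by
          by_contra hcon
          push_neg at hcon
          rw [C.mem_a_iff hm1' hm2'] at humem
          have h1 : C.R j ≤ C.R m' := humem.2
          have h2 : C.R m' < C.R j := C.R_strict_mono hm1' hcon hj2
          linarith
        exact Finset.mem_image.2 ⟨m', Finset.mem_filter.2 ⟨Finset.mem_Icc.2 ⟨hm'j, hm2'⟩, humem⟩, rfl⟩
    have hcard : C.x + 1 ≤ S.card := by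
      have h1 := C.overlap_right_large hx1 hj1 hj2
      have h2 := Finset.card_le_card hOsub
      have h3 := Finset.card_image_le (f := C.a) (s := S)
      omega
    -- downward closure
    by_contra hmem
    have hclosed : ∀ m' ∈ S, m' < m := by
      intro m' hm'
      obtain ⟨hrange, hmem'⟩ := Finset.mem_filter.1 hm'
      rw [Finset.mem_Icc] at hrange
      by_contra hcon
      push_neg at hcon
      apply hmem
      have hm'1 : 1 ≤ m' := le_trans hj1 hrange.1
      rw [C.mem_a_iff hm'1 hrange.2] at hmem'
      rw [C.mem_a_iff (le_trans hj1 hjm) hmk]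
      constructor
      · exact le_trans (C.L_mono (le_trans hj1 hjm) hcon hrange.2) hmem'.1
      · have := C.R_mono hj1 hjm hmk
        rw [R] at this
        exact this
    have hsub2 : S ⊆ Finset.Icc j (m - 1) := by
      intro m' hm'
      have h1 := hclosed m' hm'
      obtain ⟨hrange, _⟩ := Finset.mem_filter.1 hm'
      rw [Finset.mem_Icc] at hrange
      exact Finset.mem_Icc.2 ⟨hrange.1, by omega⟩
    have := Finset.card_le_card hsub2
    rw [Nat.card_Icc] at this
    omega

end LabeledMinCounterexample

namespace LabeledMinCounterexample

variable (C : LabeledMinCounterexample)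

/-- indices of `a`-arcs meeting `q t`. -/
noncomputable def At (t : ℕ) : Finset ℕ :=
  (Finset.Icc 1 C.k).filter (fun j => ((C.a j).pts ∩ (C.q t).pts).Nonempty)

lemma At_card (hx1 : 1 ≤ C.x) {t : ℕ} (ht1 : 1 ≤ t) (ht2 : t ≤ C.r) :
    C.x ≤ (C.At t).card := by
  classical
  obtain ⟨N, hN, hNcard⟩ := C.rainbow (C.q t) (C.q_arcs ht1 ht2) hx1
  have hqmem : C.q t ∈ (Finset.Icc 1 C.r).image C.q :=
    Finset.mem_image.2 ⟨t, Finset.mem_Icc.2 ⟨ht1, ht2⟩, rfl⟩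
  have hsub : N ⊆ ((Finset.Icc 1 C.r).image C.q).erase (C.q t) ∪ (C.At t).image C.a := by
    intro u hu
    obtain ⟨huarc, hune, huint⟩ := hN u hu
    rcases C.classify huarc with ⟨t', ht1', ht2', rfl⟩ | ⟨j, hj1, hj2, rfl⟩
    · exact Finset.mem_union_left _ (Finset.mem_erase.2
        ⟨hune, Finset.mem_image.2 ⟨t', Finset.mem_Icc.2 ⟨ht1', ht2'⟩, rfl⟩⟩)
    · refine Finset.mem_union_right _ (Finset.mem_image.2 ⟨j, ?_, rfl⟩)
      exact Finset.mem_filter.2 ⟨Finset.mem_Icc.2 ⟨hj1, hj2⟩, huint⟩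
  have h1 : ((Finset.Icc 1 C.r).image C.q).card = C.r := by
    rw [C.Qimg_eq, C.hr]
  have h2 : (((Finset.Icc 1 C.r).image C.q).erase (C.q t)).card = C.r - 1 := by
    rw [Finset.card_erase_of_mem hqmem, h1]
  have h3 := Finset.card_le_card hsub
  have h4 := Finset.card_union_le (((Finset.Icc 1 C.r).image C.q).erase (C.q t))
    ((C.At t).image C.a)
  have h5 := Finset.card_image_le (f := C.a) (s := C.At t)
  omega

/-- All arcs `a m` for `i-2x+1 ≤ m ≤ i` contain the right endpoint of `a (i-2x+1)`. -/
lemma window (hx1 : 1 ≤ C.x) {i : ℕ} (h2x : 2 * C.x ≤ i) (hik : i + C.x ≤ C.k)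
    (hp : C.a i ∈ C.F.overlap (C.a (i - 2 * C.x + 1)).right) :
    ∀ m, i - 2 * C.x + 1 ≤ m → m ≤ i → (C.a (i - 2 * C.x + 1)).right ∈ (C.a m).pts := by
  intro m hm1 hm2
  set i' := i - 2 * C.x + 1 with hi'
  have hi'1 : 1 ≤ i' := by omega
  have hi'k : i' ≤ C.k := by omega
  have hi1 : 1 ≤ i := by omega
  have hik' : i ≤ C.k := by omega
  have hRi' : C.R i' = angFrom C.p₀ (C.a i').right := rfl
  have hmem := ((C.mem_overlap_iff).1 hp).2
  rw [C.mem_a_iff hi1 hik'] at hmem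
  rw [C.mem_a_iff (by omega) (by omega)]
  constructor
  · exact le_trans (C.L_mono (by omega) hm2 hik') hmem.1
  · have := C.R_mono hi'1 hm1 (by omega)
    rw [hRi'] at this
    exact this

lemma dichotomy (hx1 : 1 ≤ C.x) (hk3 : 3 * C.x ≤ C.k) {t s : ℕ}
    (ht1 : 1 ≤ t) (ht2 : t ≤ C.r) (hs1 : 1 ≤ s) (hsx : s ≤ C.x) :
    ((C.a s).pts ∩ (C.q t).pts).Nonempty ∨
      ((C.a (C.k - C.x + s)).pts ∩ (C.q t).pts).Nonempty := by
  classical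
  by_contra hcon
  push_neg at hcon
  obtain ⟨hc1, hc2⟩ := hcon
  have hsub : C.At t ⊆ Finset.Icc 1 (s - 1) ∪ Finset.Icc (C.k - C.x + s + 1) C.k := by
    intro j hj
    obtain ⟨hIcc, hint⟩ := Finset.mem_filter.1 hj
    rw [Finset.mem_Icc] at hIcc
    obtain ⟨z, hza, hzq⟩ := hint
    have hza' := hza
    rw [C.mem_a_iff hIcc.1 hIcc.2] at hza'
    rcases C.q_mem_cases ht1 ht2 hzq with hcase | ⟨hlam, hcase⟩
    · -- right endpoint of q t is in a s , unless j < s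
      have hjs : j < s := by
        by_contra hcon2
        push_neg at hcon2
        suffices hzz : (C.q t).right ∈ (C.a s).pts ∩ (C.q t).pts by
          rw [hc1] at hzz; exact hzz
        refine ⟨?_, (C.q t).right_mem_pts⟩
        rw [C.mem_a_iff hs1 (by omega)]
        have hrho : angFrom C.p₀ (C.q t).right = C.rho t := rfl
        rw [hrho]
        constructor
        · have := C.L_mono hs1 hcon2 hIcc.2
          linarith [hza'.1]
        · have hRs : C.R s = angFrom C.p₀ (C.a s).right := rfl
          exact le_of_lt (C.rho_lt_R ht1 ht2 hs1 (by omega))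
      exact Finset.mem_union_left _ (Finset.mem_Icc.2 ⟨hIcc.1, by omega⟩)
    · -- left endpoint of q t is in a (k-x+s) , unless j > k-x+s
      have hjs : C.k - C.x + s + 1 ≤ j := by
        by_contra hcon2
        push_neg at hcon2
        suffices hzz : (C.q t).left ∈ (C.a (C.k - C.x + s)).pts ∩ (C.q t).pts by
          rw [hc2] at hzz; exact hzz
        refine ⟨?_, (C.q t).left_mem_pts⟩
        rw [C.mem_a_iff (by omega) (by omega)]
        have hlamr : angFrom C.p₀ (C.q t).left = C.lam t := rfl
        rw [hlamr]
        constructor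
        · exact le_of_lt (C.L_lt_lam ht1 ht2 (by omega) (by omega) hlam)
        · have := C.R_mono hIcc.1 (by omega : j ≤ C.k - C.x + s) (by omega)
          linarith [hza'.2]
      exact Finset.mem_union_right _ (Finset.mem_Icc.2 ⟨hjs, hIcc.2⟩)
  have h1 := Finset.card_le_card hsub
  have h2 := Finset.card_union_le (Finset.Icc 1 (s - 1)) (Finset.Icc (C.k - C.x + s + 1) C.k)
  have h3 := C.At_card hx1 ht1 ht2
  rw [Nat.card_Icc, Nat.card_Icc] at h2
  omega

end LabeledMinCounterexample

section Assembly

lemma singleton_connected {V : Type*} (G : SimpleGraph V) (v : V) :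
    (G.induce {v}).Connected := by
  constructor
  · intro a b
    have ha : a.1 = v := a.2
    have hb : b.1 = v := b.2
    have : a = b := Subtype.ext (ha.trans hb.symm)
    rw [this]

/-- two residues in `[1,x]` that agree modulo `x` are equal. -/
lemma resid {x s s' A B : ℕ} (hs1 : 1 ≤ s) (hsx : s ≤ x) (hs'1 : 1 ≤ s') (hs'x : s' ≤ x)
    (h : s + x * A = s' + x * B) : s = s' := by
  rcases lt_trichotomy A B with hAB | rfl | hAB
  · exfalso
    set d := B - A with hd
    have e : B = A + d := by omega
    have h2 : x * B = x * A + x * d := by rw [e, Nat.mul_add]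
    have h3 : x * 1 ≤ x * d := Nat.mul_le_mul_left x (by omega)
    rw [Nat.mul_one] at h3
    have h4 : s = s' + x * d := by omega
    omega
  · omega
  · exfalso
    set d := A - B with hd
    have e : A = B + d := by omega
    have h2 : x * A = x * B + x * d := by rw [e, Nat.mul_add]
    have h3 : x * 1 ≤ x * d := Nat.mul_le_mul_left x (by omega)
    rw [Nat.mul_one] at h3
    have h4 : s' = s + x * d := by omega
    omega

namespace LabeledMinCounterexample

variable (C : LabeledMinCounterexample)

/-- A chain of `a`-arcs: a low run with step `x` from `s` up to `T`, and a high run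
with step `x` from `H` up to `mtop`. -/
def chainSet (s T H mtop : ℕ) : Set {a : CArc // a ∈ C.F.arcs} :=
  {u | ∃ j, ((∃ c, j = s + C.x * c ∧ j ≤ T) ∨ (∃ c, j = H + C.x * c ∧ j ≤ mtop)) ∧
    u.1 = C.a j}

lemma chainSet_index_bounds {s T H mtop j : ℕ} (hs1 : 1 ≤ s) (hH1 : 1 ≤ H)
    (hTk : T ≤ C.k) (hmk : mtop ≤ C.k)
    (hj : (∃ c, j = s + C.x * c ∧ j ≤ T) ∨ (∃ c, j = H + C.x * c ∧ j ≤ mtop)) :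
    1 ≤ j ∧ j ≤ C.k := by
  rcases hj with ⟨c, rfl, hle⟩ | ⟨c, rfl, hle⟩
  · omega
  · omega

lemma chainSet_connected (hx1 : 1 ≤ C.x) {s T H mtop : ℕ} (hs1 : 1 ≤ s)
    (hT : ∃ c, T = s + C.x * c) (hmtop : ∃ c, mtop = H + C.x * c)
    (hH1 : 1 ≤ H) (hTk : T ≤ C.k) (hmk : mtop ≤ C.k) (hTH : T < H)
    (hadjTH : ((C.a T).pts ∩ (C.a H).pts).Nonempty) :
    (C.F.graph.induce (C.chainSet s T H mtop)).Connected := by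
  classical
  obtain ⟨cT, hcT⟩ := hT
  obtain ⟨cM, hcM⟩ := hmtop
  have hsT : s ≤ T := by
    rw [hcT]; exact Nat.le_add_right _ _
  have hHm : H ≤ mtop := by
    rw [hcM]; exact Nat.le_add_right _ _
  set S := C.chainSet s T H mtop with hSdef
  -- vertices
  have hTmem : (⟨C.a T, C.a_arcs (by omega) hTk⟩ : {a : CArc // a ∈ C.F.arcs}) ∈ S :=
    ⟨T, Or.inl ⟨cT, hcT, le_refl _⟩, rfl⟩
  have hHmem : (⟨C.a H, C.a_arcs hH1 (by omega)⟩ : {a : CArc // a ∈ C.F.arcs}) ∈ S :=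
    ⟨H, Or.inr ⟨0, by omega, hHm⟩, rfl⟩
  set wT : ↥S := ⟨⟨C.a T, C.a_arcs (by omega) hTk⟩, hTmem⟩ with hwT
  -- a generic adjacency helper for consecutive chain elements
  have hstep : ∀ (j : ℕ) (h1 : 1 ≤ j) (h2 : j + C.x ≤ C.k),
      C.F.graph.Adj ⟨C.a j, C.a_arcs h1 (by omega)⟩
        ⟨C.a (j + C.x), C.a_arcs (by omega) h2⟩ := by
    intro j h1 h2
    constructor
    · intro hh
      have := congrArg Subtype.val hh
      have := C.a_inj _ _ h1 (by omega) (by omega) (by omega) this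
      omega
    · exact ⟨(C.a j).right, (C.a j).right_mem_pts,
        C.step_lemma hx1 h1 (by omega) (by omega) (le_refl _) (by omega)⟩
  -- climbing in the low run
  have climb : ∀ (n : ℕ) (j c : ℕ) (hjc : j = s + C.x * c) (hjT : j ≤ T) (hd : T - j ≤ n)
      (hjm : (⟨C.a j, C.a_arcs (by omega) (by omega)⟩ :
          {a : CArc // a ∈ C.F.arcs}) ∈ S),
        (C.F.graph.induce S).Reachable ⟨⟨C.a j, C.a_arcs (by omega) (by omega)⟩, hjm⟩ wT := by
    intro n
    induction n with
    | zero =>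
      intro j c hjc hjT hd hjm
      have : j = T := by omega
      subst this
      rfl
    | succ n ih =>
      intro j c hjc hjT hd hjm
      rcases eq_or_lt_of_le hjT with heq | hlt
      · subst heq
        rfl
      · -- j < T, move to j + x
        have hccT : c < cT := by
          have h1 : s + C.x * c < s + C.x * cT := by rw [← hjc, ← hcT]; exact hlt
          have h2 : C.x * c < C.x * cT := by omega
          exact Nat.lt_of_mul_lt_mul_left h2
        have hnext : j + C.x ≤ T := by
          have h1 : C.x * (c + 1) ≤ C.x * cT := Nat.mul_le_mul_left _ (by omega)
          have h2 : C.x * (c + 1) = C.x * c + C.x := by ring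
          omega
        have hnextmem : (⟨C.a (j + C.x), C.a_arcs (by omega) (by omega)⟩ :
            {a : CArc // a ∈ C.F.arcs}) ∈ S := by
          refine ⟨j + C.x, Or.inl ⟨c + 1, ?_, hnext⟩, rfl⟩
          have : C.x * (c + 1) = C.x * c + C.x := by ring
          omega
        have hadj : (C.F.graph.induce S).Adj
            ⟨⟨C.a j, C.a_arcs (by omega) (by omega)⟩, hjm⟩
            ⟨⟨C.a (j + C.x), C.a_arcs (by omega) (by omega)⟩, hnextmem⟩ :=
          hstep j (by omega) (by omega)
        exact hadj.reachable.trans (ih (j + C.x) (c + 1) (by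
          have : C.x * (c + 1) = C.x * c + C.x := by ring
          omega) hnext (by omega) hnextmem)
  -- descending in the high run
  have descend : ∀ (c : ℕ) (j : ℕ) (hjc : j = H + C.x * c) (hjm : j ≤ mtop)
      (hmem : (⟨C.a j, C.a_arcs (by omega) (by omega)⟩ :
          {a : CArc // a ∈ C.F.arcs}) ∈ S),
        (C.F.graph.induce S).Reachable ⟨⟨C.a j, C.a_arcs (by omega) (by omega)⟩, hmem⟩
          ⟨⟨C.a H, C.a_arcs hH1 (by omega)⟩, hHmem⟩ := by
    intro c
    induction c with
    | zero =>
      intro j hjc hjm hmem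
      have : j = H := by omega
      subst this
      rfl
    | succ c ih =>
      intro j hjc hjm hmem
      have hxc : C.x * (c + 1) = C.x * c + C.x := by ring
      have hjeq : H + C.x * c + C.x = j := by omega
      subst hjeq
      have hj'm : H + C.x * c ≤ mtop := by omega
      have hj'mem : (⟨C.a (H + C.x * c), C.a_arcs (by omega) (by omega)⟩ :
          {a : CArc // a ∈ C.F.arcs}) ∈ S := ⟨H + C.x * c, Or.inr ⟨c, rfl, hj'm⟩, rfl⟩
      have hadjG := hstep (H + C.x * c) (by omega) (by omega)
      have hadj : (C.F.graph.induce S).Adj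
          ⟨⟨C.a (H + C.x * c), C.a_arcs (by omega) (by omega)⟩, hj'mem⟩
          ⟨⟨C.a (H + C.x * c + C.x), C.a_arcs (by omega) (by omega)⟩, hmem⟩ := hadjG
      exact hadj.symm.reachable.trans (ih (H + C.x * c) rfl hj'm hj'mem)
  -- the bridge between the two runs
  have hbridge : (C.F.graph.induce S).Reachable
      ⟨⟨C.a H, C.a_arcs hH1 (by omega)⟩, hHmem⟩ wT := by
    have hadjG : C.F.graph.Adj (⟨C.a H, C.a_arcs hH1 (by omega)⟩ : {a : CArc // a ∈ C.F.arcs})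
        ⟨C.a T, C.a_arcs (by omega) hTk⟩ := by
      constructor
      · intro hh
        have h2 := congrArg Subtype.val hh
        have := C.a_inj _ _ hH1 (by omega) (by omega) hTk h2
        omega
      · obtain ⟨z, hz1, hz2⟩ := hadjTH
        exact ⟨z, hz2, hz1⟩
    have hadj : (C.F.graph.induce S).Adj
        ⟨⟨C.a H, C.a_arcs hH1 (by omega)⟩, hHmem⟩ wT := hadjG
    exact hadj.reachable
  rw [SimpleGraph.connected_iff_exists_forall_reachable]
  refine ⟨wT, ?_⟩
  rintro ⟨u, hu⟩
  obtain ⟨j, hj, hju⟩ := hu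
  have hreach : ∀ (w : {a : CArc // a ∈ C.F.arcs}) (jw : ℕ)
      (hjw : (∃ c, jw = s + C.x * c ∧ jw ≤ T) ∨ (∃ c, jw = H + C.x * c ∧ jw ≤ mtop))
      (hwv : w.1 = C.a jw) (hwS : w ∈ S),
      (C.F.graph.induce S).Reachable ⟨w, hwS⟩ wT := by
    intro w jw hjw hwv hwS
    have hbnd := C.chainSet_index_bounds hs1 hH1 hTk hmk hjw
    have hweq : (⟨w, hwS⟩ : ↥S) = ⟨⟨C.a jw, C.a_arcs hbnd.1 hbnd.2⟩, by
        rw [show (⟨C.a jw, C.a_arcs hbnd.1 hbnd.2⟩ : {a : CArc // a ∈ C.F.arcs})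
          = w from (Subtype.ext hwv).symm]; exact hwS⟩ := by
      exact Subtype.ext (Subtype.ext hwv)
    rw [hweq]
    rcases hjw with ⟨c, hc, hle⟩ | ⟨c, hc, hle⟩
    · exact climb (T - jw) jw c hc hle (le_refl _) _
    · exact (descend c jw hc hle _).trans hbridge
  exact (hreach u j hj hju _).symm

end LabeledMinCounterexample

end Assembly

/-- In the labeled minimum counterexample, for every `i` with
`2x ≤ i ≤ k − x`, the arc `a i` is not clockwise adjacent to the arc `a (i − 2x + 1)`. -/
theorem a_not_cw_adjacent (C : LabeledMinCounterexample) :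
    ∀ i, 2 * C.x ≤ i → i ≤ C.k - C.x →
      ¬ C.F.CwAdj (C.a (i - 2 * C.x + 1)) (C.a i) := by
  classical
  intro i h2x hikx hcw
  obtain ⟨hnecw, hp⟩ := hcw
  apply C.no_clique_minor (C.r + C.x) C.hx
  -- chain data: for each s ∈ [1,x], the top T of the low run and the bottom H of the
  -- high run.
  have hdata : ∀ s : ℕ, ∃ T H cT cH : ℕ, 1 ≤ s → s ≤ C.x →
      (T = s + C.x * cT ∧ i - 2 * C.x + 1 ≤ T ∧ T ≤ i - C.x ∧
       i - C.x + 1 ≤ H ∧ H ≤ i ∧ C.k - C.x + s = H + C.x * cH) := by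
    intro s
    by_cases hs : 1 ≤ s ∧ s ≤ C.x
    · obtain ⟨hs1, hsx⟩ := hs
      have hx1 : 1 ≤ C.x := le_trans hs1 hsx
      have hik : i + C.x ≤ C.k := by omega
      have hd1 := Nat.div_add_mod (i - C.x - s) C.x
      have hm1 : (i - C.x - s) % C.x < C.x := Nat.mod_lt _ (by omega)
      have hd2 := Nat.div_add_mod (C.k - i + s - 1) C.x
      have hm2 : (C.k - i + s - 1) % C.x < C.x := Nat.mod_lt _ (by omega)
      exact ⟨s + C.x * ((i - C.x - s) / C.x),
        (C.k - C.x + s) - C.x * ((C.k - i + s - 1) / C.x),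
        (i - C.x - s) / C.x, (C.k - i + s - 1) / C.x, fun _ _ =>
        ⟨rfl, by omega, by omega, by omega, by omega, by omega⟩⟩
    · exact ⟨0, 0, 0, 0, fun h1 h2 => absurd ⟨h1, h2⟩ hs⟩
  choose Tf Hf cTf cHf hTH using hdata
  have hwinG : 1 ≤ C.x → ∀ m, i - 2 * C.x + 1 ≤ m → m ≤ i →
      (C.a (i - 2 * C.x + 1)).right ∈ (C.a m).pts := by
    intro hx1
    exact C.window hx1 h2x (by omega) hp
  refine ⟨fun idx => if h : idx.1 < C.r
      then {(⟨C.q (idx.1 + 1), C.q_arcs (by omega) (by omega)⟩ : {a : CArc // a ∈ C.F.arcs})}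
      else C.chainSet (idx.1 - C.r + 1) (Tf (idx.1 - C.r + 1)) (Hf (idx.1 - C.r + 1))
        (C.k - C.x + (idx.1 - C.r + 1)), ?_, ?_, ?_⟩
  · -- connectivity
    intro idx
    beta_reduce
    rcases Nat.lt_or_ge idx.1 C.r with h | h
    · rw [dif_pos h]
      exact singleton_connected _ _
    · rw [dif_neg (not_lt.2 h)]
      have hidx := idx.2
      set s := idx.1 - C.r + 1 with hsdef
      have hs1 : 1 ≤ s := by omega
      have hsx : s ≤ C.x := by omega
      have hx1 : 1 ≤ C.x := by omega
      obtain ⟨hTc, hT1, hT2, hH1, hH2, hHm⟩ := hTH s hs1 hsx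
      have hik : i + C.x ≤ C.k := by omega
      refine C.chainSet_connected hx1 hs1 ⟨cTf s, hTc⟩ ⟨cHf s, hHm⟩ (by omega) (by omega)
        (by omega) (by omega) ?_
      exact ⟨(C.a (i - 2 * C.x + 1)).right, hwinG hx1 (Tf s) (by omega) (by omega),
        hwinG hx1 (Hf s) (by omega) (by omega)⟩
  · -- disjointness
    intro idx idx' hne'
    beta_reduce
    have hvalne : idx.1 ≠ idx'.1 := fun hh => hne' (Fin.ext hh)
    have hidx := idx.2
    have hidx' := idx'.2
    rcases Nat.lt_or_ge idx.1 C.r with h | h <;> rcases Nat.lt_or_ge idx'.1 C.r with h' | h'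
    · rw [dif_pos h, dif_pos h']
      apply Set.disjoint_left.2
      rintro u hu hu'
      have h1 : u.1 = C.q (idx.1 + 1) := congrArg Subtype.val hu
      have h2 : u.1 = C.q (idx'.1 + 1) := congrArg Subtype.val hu'
      have := C.q_inj _ _ (by omega) (by omega) (by omega) (by omega) (h1.symm.trans h2)
      omega
    · rw [dif_pos h, dif_neg (not_lt.2 h')]
      apply Set.disjoint_left.2
      rintro u hu ⟨j, hj, hval⟩
      obtain ⟨hTc, hT1, hT2, hH1, hH2, hHm⟩ := hTH (idx'.1 - C.r + 1) (by omega) (by omega)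
      have hbnd := C.chainSet_index_bounds (by omega) (by omega) (by omega) (by omega) hj
      have h1 : u.1 = C.q (idx.1 + 1) := congrArg Subtype.val hu
      exact C.a_ne_q hbnd.1 hbnd.2 (by omega) (by omega) (hval.symm.trans h1)
    · rw [dif_neg (not_lt.2 h), dif_pos h']
      apply Set.disjoint_left.2
      rintro u ⟨j, hj, hval⟩ hu'
      obtain ⟨hTc, hT1, hT2, hH1, hH2, hHm⟩ := hTH (idx.1 - C.r + 1) (by omega) (by omega)
      have hbnd := C.chainSet_index_bounds (by omega) (by omega) (by omega) (by omega) hj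
      have h1 : u.1 = C.q (idx'.1 + 1) := congrArg Subtype.val hu'
      exact C.a_ne_q hbnd.1 hbnd.2 (by omega) (by omega) (hval.symm.trans h1)
    · rw [dif_neg (not_lt.2 h), dif_neg (not_lt.2 h')]
      apply Set.disjoint_left.2
      rintro u ⟨j, hj, hval⟩ ⟨j', hj', hval'⟩
      set s := idx.1 - C.r + 1 with hsdef
      set s' := idx'.1 - C.r + 1 with hsdef'
      rcases hj with ⟨c, hc, hle⟩ | ⟨c, hc, hle⟩ <;>
        rcases hj' with ⟨c', hc', hle'⟩ | ⟨c', hc', hle'⟩ <;>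
        [skip; skip; skip; skip] <;>
        (obtain ⟨hTc, hT1, hT2, hH1, hH2, hHm⟩ := hTH s (by omega) (by omega)) <;>
        (obtain ⟨hTc', hT1', hT2', hH1', hH2', hHm'⟩ := hTH s' (by omega) (by omega)) <;>
        (have hjj' : j = j' :=
          C.a_inj _ _ (by omega) (by omega) (by omega) (by omega) (hval.symm.trans hval'))
      · exact (show s ≠ s' by omega) (resid (show 1 ≤ s by omega) (show s ≤ C.x by omega)
          (by omega) (by omega) ((hc.symm.trans hjj').trans hc'))
      · -- j in low run of s, high run of s' : impossible by index ranges
        omega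
      · omega
      · -- both high runs
        have hma : C.x * (c + cHf s') = C.x * c + C.x * cHf s' := Nat.mul_add _ _ _
        have hmb : C.x * (c' + cHf s) = C.x * c' + C.x * cHf s := Nat.mul_add _ _ _
        have hA : s + C.x * (c + cHf s') = s' + C.x * (c' + cHf s) := by omega
        exact (show s ≠ s' by omega) (resid (by omega) (by omega) (by omega) (by omega) hA)
  · -- pairwise adjacency
    intro idx idx' hne'
    beta_reduce
    have hvalne : idx.1 ≠ idx'.1 := fun hh => hne' (Fin.ext hh)
    have hidx := idx.2
    have hidx' := idx'.2
    rcases Nat.lt_or_ge idx.1 C.r with h | h <;> rcases Nat.lt_or_ge idx'.1 C.r with h' | h'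
    · rw [dif_pos h, dif_pos h']
      refine ⟨_, rfl, _, rfl, ?_, C.p₀, C.q_p₀ (by omega) (by omega), C.q_p₀ (by omega) (by omega)⟩
      intro hh
      have h1 := congrArg Subtype.val hh
      have := C.q_inj _ _ (by omega) (by omega) (by omega) (by omega) h1
      omega
    · rw [dif_pos h, dif_neg (not_lt.2 h')]
      set s := idx'.1 - C.r + 1 with hsdef
      have hs1 : 1 ≤ s := by omega
      have hsx : s ≤ C.x := by omega
      have hx1 : 1 ≤ C.x := by omega
      have hk3 : 3 * C.x ≤ C.k := by omega
      obtain ⟨hTc, hT1, hT2, hH1, hH2, hHm⟩ := hTH s hs1 hsx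
      rcases C.dichotomy hx1 hk3 (by omega : 1 ≤ idx.1 + 1) (by omega) hs1 hsx with hd | hd
      · obtain ⟨z, hz1, hz2⟩ := hd
        refine ⟨_, rfl, ⟨C.a s, C.a_arcs hs1 (by omega)⟩,
          ⟨s, Or.inl ⟨0, by simp, by omega⟩, rfl⟩, ?_, z, hz2, hz1⟩
        intro hh
        have h1 := congrArg Subtype.val hh
        exact C.a_ne_q hs1 (by omega) (by omega) (by omega) h1.symm
      · obtain ⟨z, hz1, hz2⟩ := hd
        refine ⟨_, rfl, ⟨C.a (C.k - C.x + s), C.a_arcs (by omega) (by omega)⟩,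
          ⟨C.k - C.x + s, Or.inr ⟨cHf s, hHm, le_refl _⟩, rfl⟩, ?_, z, hz2, hz1⟩
        intro hh
        have h1 := congrArg Subtype.val hh
        exact C.a_ne_q (by omega) (by omega) (by omega) (by omega) h1.symm
    · rw [dif_neg (not_lt.2 h), dif_pos h']
      set s := idx.1 - C.r + 1 with hsdef
      have hs1 : 1 ≤ s := by omega
      have hsx : s ≤ C.x := by omega
      have hx1 : 1 ≤ C.x := by omega
      have hk3 : 3 * C.x ≤ C.k := by omega
      obtain ⟨hTc, hT1, hT2, hH1, hH2, hHm⟩ := hTH s hs1 hsx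
      rcases C.dichotomy hx1 hk3 (by omega : 1 ≤ idx'.1 + 1) (by omega) hs1 hsx with hd | hd
      · obtain ⟨z, hz1, hz2⟩ := hd
        refine ⟨⟨C.a s, C.a_arcs hs1 (by omega)⟩,
          ⟨s, Or.inl ⟨0, by simp, by omega⟩, rfl⟩, _, rfl, ?_, z, hz1, hz2⟩
        intro hh
        have h1 := congrArg Subtype.val hh
        exact C.a_ne_q hs1 (by omega) (by omega) (by omega) h1
      · obtain ⟨z, hz1, hz2⟩ := hd
        refine ⟨⟨C.a (C.k - C.x + s), C.a_arcs (by omega) (by omega)⟩,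
          ⟨C.k - C.x + s, Or.inr ⟨cHf s, hHm, le_refl _⟩, rfl⟩, _, rfl, ?_, z, hz1, hz2⟩
        intro hh
        have h1 := congrArg Subtype.val hh
        exact C.a_ne_q (by omega) (by omega) (by omega) (by omega) h1
    · rw [dif_neg (not_lt.2 h), dif_neg (not_lt.2 h')]
      set s := idx.1 - C.r + 1 with hsdef
      set s' := idx'.1 - C.r + 1 with hsdef'
      have hs1 : 1 ≤ s := by omega
      have hsx : s ≤ C.x := by omega
      have hs'1 : 1 ≤ s' := by omega
      have hs'x : s' ≤ C.x := by omega
      have hx1 : 1 ≤ C.x := by omega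
      obtain ⟨hTc, hT1, hT2, hH1, hH2, hHm⟩ := hTH s hs1 hsx
      obtain ⟨hTc', hT1', hT2', hH1', hH2', hHm'⟩ := hTH s' hs'1 hs'x
      refine ⟨⟨C.a (Tf s), C.a_arcs (by omega) (by omega)⟩,
        ⟨Tf s, Or.inl ⟨cTf s, hTc, le_refl _⟩, rfl⟩,
        ⟨C.a (Tf s'), C.a_arcs (by omega) (by omega)⟩,
        ⟨Tf s', Or.inl ⟨cTf s', hTc', le_refl _⟩, rfl⟩, ?_,
        (C.a (i - 2 * C.x + 1)).right, hwinG hx1 (Tf s) (by omega) (by omega),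
        hwinG hx1 (Tf s') (by omega) (by omega)⟩
      intro hh
      have h1 := congrArg Subtype.val hh
      have h2 : Tf s = Tf s' := C.a_inj _ _ (by omega) (by omega) (by omega) (by omega) h1
      have h3 : s + C.x * cTf s = s' + C.x * cTf s' := by rw [← hTc, ← hTc', h2]
      exact (by omega : s ≠ s') (resid hs1 hsx hs'1 hs'x h3)
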